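/- Let ħ > 0, let N ≥ 1, let w_1, …, w_N be positive reals, and let h : ℝ^N × ℝ^N × (ℂ^{2×2})^N → ℝ be continuously differentiable (regarding ℂ^{2×2} as a finite-dimensional real vector space). Let q_a, p_a : ℝ → ℝ and ρ_a : ℝ → ℂ^{2×2} (a = 1, …, N) be differentiable curves, and suppose there are continuous maps G_a : ℝ → ℂ^{2×2} with G_a(t) Hermitian for every t, such that for each a and t the partial derivative of h at (q(t), p(t), ρ(t)) with respect to the a-th matrix slot, applied to any direction δ ∈ ℂ^{2×2}, equals Re Tr(G_a(t)ᴴ·δ). If the curves satisfy the koopmon equations q_a'(t) = w_a^{-1}·∂h/∂p_a, p_a'(t) = −w_a^{-1}·∂h/∂q_a, and iħ·ρ_a'(t) = w_a^{-1}·[G_a(t), ρ_a(t)], then t ↦ h(q(t), p(t), ρ(t)) is constant. -/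

import Mathlib

open Matrix Complex

attribute [local instance] Matrix.normedAddCommGroup Matrix.normedSpace

/-- Energy conservation for the koopmon scheme: if `h` is a `C¹` Hamiltonian
function of the state `(q, p, ρ)`, whose partial derivative in each matrix
slot `ρ_a` is represented via the real Frobenius pairing by a Hermitian matrix
`G_a(t)`, and the curves satisfy `q_a' = w_a⁻¹ ∂h/∂p_a`, `p_a' = −w_a⁻¹ ∂h/∂q_a`,
`iħ ρ_a' = w_a⁻¹ [G_a, ρ_a]`, then `t ↦ h(q(t), p(t), ρ(t))` is constant. -/
theorem koopmon_energy_conservation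
    (hbar : ℝ) (hhbar : 0 < hbar)
    (N : ℕ) (hN : 1 ≤ N)
    (w : Fin N → ℝ) (hw : ∀ a, 0 < w a)
    (h : (Fin N → ℝ) × (Fin N → ℝ) × (Fin N → Matrix (Fin 2) (Fin 2) ℂ) → ℝ)
    (hsmooth : ContDiff ℝ 1 h)
    (q p : Fin N → ℝ → ℝ)
    (ρ : Fin N → ℝ → Matrix (Fin 2) (Fin 2) ℂ)
    (hq : ∀ a, Differentiable ℝ (q a))
    (hp : ∀ a, Differentiable ℝ (p a))
    (hρ : ∀ a, Differentiable ℝ (ρ a))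
    (G : Fin N → ℝ → Matrix (Fin 2) (Fin 2) ℂ)
    (hGcont : ∀ a, Continuous (G a))
    (hGherm : ∀ a t, (G a t).IsHermitian)
    (hGrepr : ∀ (a : Fin N) (t : ℝ) (δ : Matrix (Fin 2) (Fin 2) ℂ),
      fderiv ℝ h (fun b => q b t, fun b => p b t, fun b => ρ b t)
          ((0 : Fin N → ℝ), (0 : Fin N → ℝ), Pi.single a δ)
        = (((G a t)ᴴ * δ).trace).re)
    (heq_q : ∀ a t, deriv (q a) t =
      (w a)⁻¹ * fderiv ℝ h (fun b => q b t, fun b => p b t, fun b => ρ b t)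
        ((0 : Fin N → ℝ), Pi.single a (1 : ℝ), (0 : Fin N → Matrix (Fin 2) (Fin 2) ℂ)))
    (heq_p : ∀ a t, deriv (p a) t =
      -((w a)⁻¹ * fderiv ℝ h (fun b => q b t, fun b => p b t, fun b => ρ b t)
        (Pi.single a (1 : ℝ), (0 : Fin N → ℝ), (0 : Fin N → Matrix (Fin 2) (Fin 2) ℂ))))
    (heq_ρ : ∀ a t, (Complex.I * (hbar : ℂ)) • deriv (ρ a) t =
      (w a)⁻¹ • (G a t * ρ a t - ρ a t * G a t)) :
    ∀ s t : ℝ,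
      h (fun b => q b s, fun b => p b s, fun b => ρ b s)
        = h (fun b => q b t, fun b => p b t, fun b => ρ b t) := by

  -- the curve in phase space
  set x : ℝ → (Fin N → ℝ) × (Fin N → ℝ) × (Fin N → Matrix (Fin 2) (Fin 2) ℂ) :=
    fun t => (fun b => q b t, fun b => p b t, fun b => ρ b t) with hxdef
  have hxderiv : ∀ t, HasDerivAt x
      (fun b => deriv (q b) t, fun b => deriv (p b) t, fun b => deriv (ρ b) t) t := by
    intro t
    refine HasDerivAt.prodMk ?_ (HasDerivAt.prodMk ?_ ?_)
    · exact hasDerivAt_pi.2 fun b => ((hq b) t).hasDerivAt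
    · exact hasDerivAt_pi.2 fun b => ((hp b) t).hasDerivAt
    · exact hasDerivAt_pi.2 fun b => ((hρ b) t).hasDerivAt
  have hdiff : Differentiable ℝ (fun t => h (x t)) := by
    intro t
    exact DifferentiableAt.comp t (hsmooth.differentiable one_ne_zero (x t))
      (hxderiv t).differentiableAt
  have hderiv0 : ∀ t, deriv (fun t => h (x t)) t = 0 := by
    intro t
    have hL := (hsmooth.differentiable one_ne_zero (x t)).hasFDerivAt
    set L := fderiv ℝ h (x t) with hLdef
    have hcomp : HasDerivAt (fun t => h (x t))
        (L (fun b => deriv (q b) t, fun b => deriv (p b) t, fun b => deriv (ρ b) t)) t :=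
      hL.comp_hasDerivAt t (hxderiv t)
    rw [hcomp.deriv]
    -- split the direction into three parts
    have hsplit :
        ((fun b => deriv (q b) t, fun b => deriv (p b) t, fun b => deriv (ρ b) t) :
          (Fin N → ℝ) × (Fin N → ℝ) × (Fin N → Matrix (Fin 2) (Fin 2) ℂ))
        = ((fun b => deriv (q b) t), 0, 0) + (0, (fun b => deriv (p b) t), 0)
          + (0, 0, (fun b => deriv (ρ b) t)) := by
      simp [Prod.ext_iff]
    rw [hsplit, map_add, map_add]
    -- each part is a sum of single directions
    have hql : ((fun b => deriv (q b) t : Fin N → ℝ), (0 : Fin N → ℝ),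
        (0 : Fin N → Matrix (Fin 2) (Fin 2) ℂ))
        = ∑ a, ((Pi.single a (deriv (q a) t) : Fin N → ℝ), (0 : Fin N → ℝ),
            (0 : Fin N → Matrix (Fin 2) (Fin 2) ℂ)) := by
      rw [Prod.ext_iff]; constructor
      · rw [Prod.fst_sum]; exact (Finset.univ_sum_single _).symm
      · rw [Prod.snd_sum]; simp
    have hpl : ((0 : Fin N → ℝ), (fun b => deriv (p b) t : Fin N → ℝ),
        (0 : Fin N → Matrix (Fin 2) (Fin 2) ℂ))
        = ∑ a, ((0 : Fin N → ℝ), (Pi.single a (deriv (p a) t) : Fin N → ℝ),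
            (0 : Fin N → Matrix (Fin 2) (Fin 2) ℂ)) := by
      rw [Prod.ext_iff]; constructor
      · rw [Prod.fst_sum]; simp
      · rw [Prod.snd_sum, Prod.ext_iff]; constructor
        · rw [Prod.fst_sum]; exact (Finset.univ_sum_single _).symm
        · rw [Prod.snd_sum]; simp
    have hrl : ((0 : Fin N → ℝ), (0 : Fin N → ℝ),
        (fun b => deriv (ρ b) t : Fin N → Matrix (Fin 2) (Fin 2) ℂ))
        = ∑ a, ((0 : Fin N → ℝ), (0 : Fin N → ℝ),
            (Pi.single a (deriv (ρ a) t) : Fin N → Matrix (Fin 2) (Fin 2) ℂ)) := by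
      rw [Prod.ext_iff]; constructor
      · rw [Prod.fst_sum]; simp
      · rw [Prod.snd_sum, Prod.ext_iff]; constructor
        · rw [Prod.fst_sum]; simp
        · rw [Prod.snd_sum]; exact (Finset.univ_sum_single _).symm
    rw [hql, hpl, hrl, map_sum, map_sum, map_sum]
    -- the q and p sums cancel; the ρ sum vanishes termwise
    have hqp : ∀ a : Fin N,
        L ((Pi.single a (deriv (q a) t) : Fin N → ℝ), (0 : Fin N → ℝ),
            (0 : Fin N → Matrix (Fin 2) (Fin 2) ℂ))
        + L ((0 : Fin N → ℝ), (Pi.single a (deriv (p a) t) : Fin N → ℝ),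
            (0 : Fin N → Matrix (Fin 2) (Fin 2) ℂ)) = 0 := by
      intro a
      have h1 : ((Pi.single a (deriv (q a) t) : Fin N → ℝ), (0 : Fin N → ℝ),
          (0 : Fin N → Matrix (Fin 2) (Fin 2) ℂ))
          = (deriv (q a) t) • ((Pi.single a (1:ℝ) : Fin N → ℝ), (0 : Fin N → ℝ),
              (0 : Fin N → Matrix (Fin 2) (Fin 2) ℂ)) := by
        simp [Prod.smul_mk, ← Pi.single_smul]
      have h2 : ((0 : Fin N → ℝ), (Pi.single a (deriv (p a) t) : Fin N → ℝ),
          (0 : Fin N → Matrix (Fin 2) (Fin 2) ℂ))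
          = (deriv (p a) t) • ((0 : Fin N → ℝ), (Pi.single a (1:ℝ) : Fin N → ℝ),
              (0 : Fin N → Matrix (Fin 2) (Fin 2) ℂ)) := by
        simp [Prod.smul_mk, ← Pi.single_smul]
      rw [h1, h2, L.map_smul, L.map_smul, heq_q a t, heq_p a t]
      simp only [smul_eq_mul, ← hLdef, hxdef]
      ring
    have hrho : ∀ a : Fin N,
        L ((0 : Fin N → ℝ), (0 : Fin N → ℝ),
            (Pi.single a (deriv (ρ a) t) : Fin N → Matrix (Fin 2) (Fin 2) ℂ)) = 0 := by
      intro a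
      rw [hLdef, hGrepr a t (deriv (ρ a) t)]
      have htr0 : ((G a t)ᴴ * deriv (ρ a) t).trace = 0 := by
        have hmul : (Complex.I * (hbar : ℂ)) • ((G a t)ᴴ * deriv (ρ a) t)
            = (G a t)ᴴ * ((Complex.I * (hbar : ℂ)) • deriv (ρ a) t) := by
          rw [Matrix.mul_smul]
        have := heq_ρ a t
        have htr : (Complex.I * (hbar : ℂ)) * ((G a t)ᴴ * deriv (ρ a) t).trace
            = ((G a t)ᴴ * ((w a)⁻¹ • (G a t * ρ a t - ρ a t * G a t))).trace := by
          rw [← this, ← hmul, Matrix.trace_smul, smul_eq_mul]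
        have hright : ((G a t)ᴴ * ((w a)⁻¹ • (G a t * ρ a t - ρ a t * G a t))).trace = 0 := by
          have hcyc : (G a t * (G a t * ρ a t)).trace = (G a t * (ρ a t * G a t)).trace := by
            rw [← Matrix.mul_assoc, Matrix.trace_mul_comm (G a t * G a t) (ρ a t),
              Matrix.trace_mul_comm (G a t) (ρ a t * G a t), Matrix.mul_assoc]
          rw [(hGherm a t).eq, Matrix.mul_smul, Matrix.trace_smul, mul_sub,
            Matrix.trace_sub, hcyc]
          simp
        have hne : (Complex.I * (hbar : ℂ)) ≠ 0 := by
          simp [Complex.I_ne_zero, Complex.ofReal_ne_zero, ne_of_gt hhbar]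
        have := htr.trans hright
        exact (mul_eq_zero.mp this).resolve_left hne
      rw [htr0]
      simp
    rw [← Finset.sum_add_distrib]
    simp only [hqp, hrho, Finset.sum_const_zero]
    simp
  intro s t
  exact is_const_of_deriv_eq_zero hdiff hderiv0 s t
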